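/- Let K ⊆ ℝ be open and invex with respect to η, and f : K → ℝ differentiable with a, a + η(b,a) ∈ K and η(b,a) > 0. If |f'| is preinvex on K with respect to η, then |(1/η(b,a)) ∫_a^{a+η(b,a)} f(x) dx − f((2a + η(b,a))/2)| ≤ (η(b,a)/8)(|f'(a)| + |f'(b)|). -/

import Mathlib

open MeasureTheory intervalIntegral

theorem hh_left_preinvex_abs_deriv
    (K : Set ℝ) (hK : IsOpen K) (η : ℝ → ℝ → ℝ)
    (f f' : ℝ → ℝ) (a b : ℝ)
    (hinvex : ∀ t ∈ Set.Icc (0 : ℝ) 1, a + t * η b a ∈ K)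
    (hf : ∀ x ∈ K, HasDerivAt f (f' x) x)
    (hη : 0 < η b a)
    (hpre : ∀ t ∈ Set.Icc (0 : ℝ) 1,
      |f' (a + t * η b a)| ≤ (1 - t) * |f' a| + t * |f' b|) :
    |(1 / η b a) * (∫ x in a..(a + η b a), f x) - f ((2 * a + η b a) / 2)|
      ≤ (η b a / 8) * (|f' a| + |f' b|) := by
  set c := η b a with hcdef
  set A := |f' a| with hA
  set B := |f' b| with hB
  have hA0 : 0 ≤ A := abs_nonneg _
  have hB0 : 0 ≤ B := abs_nonneg _
  set m : ℝ := a + c / 2 with hm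
  have ham : a ≤ m := by simp [hm]; linarith
  have hmc : m ≤ a + c := by simp [hm]; linarith
  have hac : a ≤ a + c := by linarith
  -- inclusion of the interval in K
  have hsub : Set.Icc a (a + c) ⊆ K := by
    intro x hx
    have ht : (x - a) / c ∈ Set.Icc (0:ℝ) 1 :=
      ⟨div_nonneg (by linarith [hx.1]) hη.le, (div_le_one hη).2 (by linarith [hx.2])⟩
    have h := hinvex _ ht
    have : a + (x - a) / c * c = x := by field_simp; ring
    rwa [this] at h
  -- pointwise bound on |f'|
  have hbd : ∀ x ∈ Set.Icc a (a + c),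
      |f' x| ≤ (1 - (x - a) / c) * A + ((x - a) / c) * B := by
    intro x hx
    have ht : (x - a) / c ∈ Set.Icc (0:ℝ) 1 :=
      ⟨div_nonneg (by linarith [hx.1]) hη.le, (div_le_one hη).2 (by linarith [hx.2])⟩
    have h := hpre _ ht
    have : a + (x - a) / c * c = x := by field_simp; ring
    rwa [this] at h
  -- continuity of f on the interval
  have hcont : ContinuousOn f (Set.Icc a (a + c)) := fun x hx =>
    ((hf x (hsub hx)).continuousAt.continuousWithinAt)
  have hfint : IntervalIntegrable f volume a (a + c) :=
    (by rwa [Set.uIcc_of_le hac] : ContinuousOn f (Set.uIcc a (a + c))).intervalIntegrable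
  -- interval integrability of f'
  have hmeas : AEStronglyMeasurable f' (volume.restrict (Set.Ioc a (a + c))) := by
    apply ((measurable_deriv f).aestronglyMeasurable.restrict).congr
    filter_upwards [ae_restrict_mem measurableSet_Ioc] with x hx
    exact (hf x (hsub ⟨hx.1.le, hx.2⟩)).deriv
  have hint : IntervalIntegrable f' volume a (a + c) := by
    rw [intervalIntegrable_iff, Set.uIoc_of_le hac]
    apply Integrable.mono' (integrable_const (A + B)) hmeas
    filter_upwards [ae_restrict_mem measurableSet_Ioc] with x hx
    have hx' : x ∈ Set.Icc a (a + c) := ⟨hx.1.le, hx.2⟩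
    have h1 := hbd x hx'
    have ht0 : 0 ≤ (x - a) / c := div_nonneg (by linarith [hx'.1]) hη.le
    have ht1 : (x - a) / c ≤ 1 := (div_le_one hη).2 (by linarith [hx'.2])
    have : |f' x| ≤ A + B := by nlinarith
    simpa using this
  have hint1 : IntervalIntegrable (fun x => (x - a) * f' x) volume a m :=
    (hint.mono_set (by rw [Set.uIcc_of_le ham, Set.uIcc_of_le hac]; exact Set.Icc_subset_Icc le_rfl hmc)).continuousOn_mul
      (by fun_prop)
  have hint2 : IntervalIntegrable (fun x => (x - (a + c)) * f' x) volume m (a + c) :=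
    (hint.mono_set (by rw [Set.uIcc_of_le hmc, Set.uIcc_of_le hac]; exact Set.Icc_subset_Icc ham le_rfl)).continuousOn_mul
      (by fun_prop)
  have hfint1 : IntervalIntegrable f volume a m :=
    hfint.mono_set (by rw [Set.uIcc_of_le ham, Set.uIcc_of_le hac]; exact Set.Icc_subset_Icc le_rfl hmc)
  have hfint2 : IntervalIntegrable f volume m (a + c) :=
    hfint.mono_set (by rw [Set.uIcc_of_le hmc, Set.uIcc_of_le hac]; exact Set.Icc_subset_Icc ham le_rfl)
  -- integration by parts on [a, m]
  have ibp1 : ∫ x in a..m, (f x + (x - a) * f' x) = (c / 2) * f m := by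
    have h := integral_eq_sub_of_hasDerivAt (f := fun x => (x - a) * f x)
      (f' := fun x => f x + (x - a) * f' x) (a := a) (b := m)
      (fun x hx => by
        have hxK : x ∈ K := by
          apply hsub
          rw [Set.uIcc_of_le ham] at hx
          exact ⟨hx.1, le_trans hx.2 hmc⟩
        have := (((hasDerivAt_id x).sub_const a).mul (hf x hxK))
        exact this.congr_deriv (by simp))
      ((hfint1).add hint1)
    rw [h]; simp only [hm]; ring
  have ibp2 : ∫ x in m..(a + c), (f x + (x - (a + c)) * f' x) = (c / 2) * f m := by
    have h := integral_eq_sub_of_hasDerivAt (f := fun x => (x - (a + c)) * f x)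
      (f' := fun x => f x + (x - (a + c)) * f' x) (a := m) (b := a + c)
      (fun x hx => by
        have hxK : x ∈ K := by
          apply hsub
          rw [Set.uIcc_of_le hmc] at hx
          exact ⟨le_trans ham hx.1, hx.2⟩
        have := (((hasDerivAt_id x).sub_const (a + c)).mul (hf x hxK))
        exact this.congr_deriv (by simp))
      ((hfint2).add hint2)
    rw [h]; simp only [hm]; ring
  set S1 : ℝ := ∫ x in a..m, (x - a) * f' x with hS1
  have e1 : S1 = (c / 2) * f m - ∫ x in a..m, f x := by
    rw [hS1]
    have := intervalIntegral.integral_add hfint1 hint1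
    rw [this] at ibp1
    linarith
  set S2 : ℝ := ∫ x in m..(a + c), (x - (a + c)) * f' x with hS2
  have e2 : S2 = (c / 2) * f m - ∫ x in m..(a + c), f x := by
    rw [hS2]
    have := intervalIntegral.integral_add hfint2 hint2
    rw [this] at ibp2
    linarith
  have hsplit : (∫ x in a..(a + c), f x) = (∫ x in a..m, f x) + ∫ x in m..(a + c), f x :=
    (integral_add_adjacent_intervals hfint1 hfint2).symm
  -- key identity
  have key : c * f m - (∫ x in a..(a + c), f x) = S1 + S2 := by
    rw [hsplit]; linarith
  -- bound S1
  have b1 : |S1| ≤ A * c^2 / 12 + B * c^2 / 24 := by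
    have h1 : |S1| ≤ ∫ x in a..m, |(x - a) * f' x| :=
      abs_integral_le_integral_abs ham
    have h2 : (∫ x in a..m, |(x - a) * f' x|)
        ≤ ∫ x in a..m, (A * (x - a) + ((B - A) / c) * (x - a)^2) := by
      apply integral_mono_on ham hint1.abs
      · apply ContinuousOn.intervalIntegrable; fun_prop
      · intro x hx
        have hx' : x ∈ Set.Icc a (a + c) := ⟨hx.1, le_trans hx.2 hmc⟩
        have hb := hbd x hx'
        have hxa : 0 ≤ x - a := by linarith [hx.1]
        rw [abs_mul, abs_of_nonneg hxa]
        have h3 : (x - a) * |f' x| ≤ (x - a) * ((1 - (x - a) / c) * A + ((x - a) / c) * B) :=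
          mul_le_mul_of_nonneg_left hb hxa
        calc (x - a) * |f' x| ≤ (x - a) * ((1 - (x - a) / c) * A + ((x - a) / c) * B) := h3
          _ = A * (x - a) + ((B - A) / c) * (x - a)^2 := by field_simp; ring
    have h3 : (∫ x in a..m, (A * (x - a) + ((B - A) / c) * (x - a)^2))
        = A * c^2 / 12 + B * c^2 / 24 := by
      have i1 : (∫ x in a..m, (x - a)) = (c/2)^2 / 2 := by
        rw [show (fun x => x - a) = (fun x => (fun u => u) (x - a)) from rfl,
          integral_comp_sub_right (fun u => u) a]
        simp [hm, integral_id]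
        try ring
      have i2 : (∫ x in a..m, (x - a)^2) = (c/2)^3 / 3 := by
        rw [show (fun x => (x - a)^2) = (fun x => (fun u => u^2) (x - a)) from rfl,
          integral_comp_sub_right (fun u => u^2) a]
        simp [hm, integral_pow]
        try ring
      have hI1 : IntervalIntegrable (fun x => A * (x - a)) volume a m := by
        apply ContinuousOn.intervalIntegrable; fun_prop
      have hI2 : IntervalIntegrable (fun x => ((B - A) / c) * (x - a)^2) volume a m := by
        apply ContinuousOn.intervalIntegrable; fun_prop
      rw [intervalIntegral.integral_add hI1 hI2, intervalIntegral.integral_const_mul, intervalIntegral.integral_const_mul, i1, i2]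
      field_simp; ring
    linarith
  -- bound S2
  have b2 : |S2| ≤ B * c^2 / 12 + A * c^2 / 24 := by
    have h1 : |S2| ≤ ∫ x in m..(a + c), |(x - (a + c)) * f' x| :=
      abs_integral_le_integral_abs hmc
    have h2 : (∫ x in m..(a + c), |(x - (a + c)) * f' x|)
        ≤ ∫ x in m..(a + c), (B * ((a + c) - x) + ((A - B) / c) * ((a + c) - x)^2) := by
      apply integral_mono_on hmc hint2.abs
      · apply ContinuousOn.intervalIntegrable; fun_prop
      · intro x hx
        have hx' : x ∈ Set.Icc a (a + c) := ⟨le_trans ham hx.1, hx.2⟩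
        have hb := hbd x hx'
        have hxa : 0 ≤ (a + c) - x := by linarith [hx.2]
        rw [abs_mul, abs_sub_comm, abs_of_nonneg hxa]
        have h3 : ((a + c) - x) * |f' x| ≤ ((a + c) - x) * ((1 - (x - a) / c) * A + ((x - a) / c) * B) :=
          mul_le_mul_of_nonneg_left hb hxa
        calc ((a + c) - x) * |f' x| ≤ ((a + c) - x) * ((1 - (x - a) / c) * A + ((x - a) / c) * B) := h3
          _ = B * ((a + c) - x) + ((A - B) / c) * ((a + c) - x)^2 := by field_simp; ring
    have h3 : (∫ x in m..(a + c), (B * ((a + c) - x) + ((A - B) / c) * ((a + c) - x)^2))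
        = B * c^2 / 12 + A * c^2 / 24 := by
      have i1 : (∫ x in m..(a + c), ((a + c) - x)) = (c/2)^2 / 2 := by
        rw [show (fun x => (a + c) - x) = (fun x => (fun u => u) ((a + c) - x)) from rfl,
          integral_comp_sub_left (fun u => u) (a + c)]
        simp [hm, integral_id]
        try ring
      have i2 : (∫ x in m..(a + c), ((a + c) - x)^2) = (c/2)^3 / 3 := by
        rw [show (fun x => ((a + c) - x)^2) = (fun x => (fun u => u^2) ((a + c) - x)) from rfl,
          integral_comp_sub_left (fun u => u^2) (a + c)]
        simp [hm, integral_pow]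
        try ring
      have hI1 : IntervalIntegrable (fun x => B * ((a + c) - x)) volume m (a + c) := by
        apply ContinuousOn.intervalIntegrable; fun_prop
      have hI2 : IntervalIntegrable (fun x => ((A - B) / c) * ((a + c) - x)^2) volume m (a + c) := by
        apply ContinuousOn.intervalIntegrable; fun_prop
      rw [intervalIntegral.integral_add hI1 hI2, intervalIntegral.integral_const_mul, intervalIntegral.integral_const_mul, i1, i2]
      field_simp; ring
    linarith
  -- put things together
  have hmid : (2 * a + c) / 2 = m := by rw [hm]; ring
  rw [hmid]
  have heq : (1 / c) * (∫ x in a..(a + c), f x) - f m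
      = -(1 / c) * (c * f m - ∫ x in a..(a + c), f x) := by
    field_simp
    ring
  rw [heq, key, abs_mul]
  have : |(-(1 / c))| = 1 / c := by
    rw [abs_neg, abs_of_pos]; positivity
  rw [this]
  have habs : |S1 + S2| ≤ (A * c^2 / 12 + B * c^2 / 24) + (B * c^2 / 12 + A * c^2 / 24) :=
    le_trans (abs_add_le _ _) (by linarith)
  calc 1 / c * |S1 + S2| ≤ 1 / c * ((A * c^2 / 12 + B * c^2 / 24) + (B * c^2 / 12 + A * c^2 / 24)) :=
        mul_le_mul_of_nonneg_left habs (by positivity)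
    _ = c / 8 * (A + B) := by field_simp; ring
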